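/- Every Banach lattice satisfies the monotone weak-Opial condition. Concretely: let (X, ‖·‖, ⪯) be a Banach lattice and let {x_n} be a monotone increasing sequence in X which converges weakly to x. Then for every y ∈ X with x ⪯ y, one has limsup_{n→∞} ‖x_n − x‖ ≤ limsup_{n→∞} ‖x_n − y‖. (Dually, if {x_n} is monotone decreasing with weak limit x and y ⪯ x, the same inequality holds.) -/

import Mathlib

open Filter

/-- A sequence converges weakly to `p` iff `f (x n) → f p` for every continuous
linear functional `f`. -/
def WeaklyConvergesTo {X : Type*} [NormedAddCommGroup X] [NormedSpace ℝ X]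
    (x : ℕ → X) (p : X) : Prop :=
  ∀ f : X →L[ℝ] ℝ, Tendsto (fun n => f (x n)) atTop (nhds (f p))

/-- The weak limit of an eventually nonnegative sequence in a Banach lattice is
nonnegative (the positive cone is closed and convex, hence weakly closed). -/
lemma weak_limit_nonneg {X : Type*} [NormedAddCommGroup X] [Lattice X] [HasSolidNorm X]
    [IsOrderedAddMonoid X] [NormedSpace ℝ X]
    [PosSMulStrictMono ℝ X] [PosSMulReflectLT ℝ X] (w : ℕ → X) (v : X)
    (hw : ∀ f : X →L[ℝ] ℝ, Tendsto (fun n => f (w n)) atTop (nhds (f v)))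
    (hpos : ∀ᶠ n in atTop, 0 ≤ w n) : 0 ≤ v := by
  by_contra hv
  have hv' : v ∉ Set.Ici (0 : X) := hv
  obtain ⟨f, u, hfu, hall⟩ :=
    geometric_hahn_banach_point_closed (convex_Ici (0 : X)) isClosed_Ici hv'
  have hev : ∀ᶠ n in atTop, u ≤ f (w n) :=
    hpos.mono fun n hn => (hall _ hn).le
  have : u ≤ f v := ge_of_tendsto (hw f) hev
  exact absurd this (not_le.mpr hfu)

/-- **Every Banach lattice satisfies the monotone weak-Opial condition**
(Proposition 3.6 of the paper).  Let `X` be a Banach lattice (a complete normed lattice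
with solid norm and compatible scalar multiplication).  If `x_n` is a monotone increasing
sequence converging weakly to `x`, then for every `y` with `x ≤ y` one has
`limsup ‖x_n - x‖ ≤ limsup ‖x_n - y‖`; dually for monotone decreasing sequences and
`y ≤ x`. -/
theorem banachLattice_monotone_weak_opial
    {X : Type*} [NormedAddCommGroup X] [Lattice X] [HasSolidNorm X] [IsOrderedAddMonoid X]
    [NormedSpace ℝ X] [CompleteSpace X]
    [PosSMulStrictMono ℝ X] [PosSMulReflectLT ℝ X]
    (x : ℕ → X) (p : X) (hweak : WeaklyConvergesTo x p) :
    ((∀ n, x n ≤ x (n + 1)) → ∀ y : X, p ≤ y →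
      limsup (fun n => ‖x n - p‖) atTop ≤ limsup (fun n => ‖x n - y‖) atTop) ∧
    ((∀ n, x (n + 1) ≤ x n) → ∀ y : X, y ≤ p →
      limsup (fun n => ‖x n - p‖) atTop ≤ limsup (fun n => ‖x n - y‖) atTop) := by
  constructor
  · intro hinc y hy
    have hmono : Monotone x := monotone_nat_of_le_succ hinc
    -- every term is below the weak limit
    have hle : ∀ m, x m ≤ p := by
      intro m
      have h0 : (0 : X) ≤ p - x m := by
        apply weak_limit_nonneg (fun n => x n - x m) (p - x m)
        · intro f
          simpa [map_sub] using (hweak f).sub_const (f (x m))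
        · filter_upwards [eventually_ge_atTop m] with n hn
          exact sub_nonneg.mpr (hmono hn)
      exact sub_nonneg.mp h0
    have key : ∀ n, ‖x n - p‖ ≤ ‖x n - y‖ := by
      intro n
      refine HasSolidNorm.solid ?_
      rw [abs_of_nonpos (sub_nonpos.mpr (hle n)),
        abs_of_nonpos (sub_nonpos.mpr ((hle n).trans hy))]
      exact neg_le_neg (sub_le_sub_left hy _)
    have hbdd : ∀ n, ‖x n - y‖ ≤ ‖x 0 - y‖ := by
      intro n
      refine HasSolidNorm.solid ?_
      rw [abs_of_nonpos (sub_nonpos.mpr ((hle n).trans hy)),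
        abs_of_nonpos (sub_nonpos.mpr ((hle 0).trans hy))]
      exact neg_le_neg (sub_le_sub_right (hmono (Nat.zero_le n)) _)
    refine limsup_le_limsup (Eventually.of_forall key) ?_ ?_
    · exact IsBoundedUnder.isCoboundedUnder_le
        (isBoundedUnder_of ⟨0, fun n => norm_nonneg _⟩)
    · exact isBoundedUnder_of ⟨‖x 0 - y‖, hbdd⟩
  · intro hdec y hy
    have hmono : Antitone x := antitone_nat_of_succ_le hdec
    have hle : ∀ m, p ≤ x m := by
      intro m
      have h0 : (0 : X) ≤ x m - p := by
        apply weak_limit_nonneg (fun n => x m - x n) (x m - p)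
        · intro f
          simpa [map_sub] using ((hweak f).const_sub (f (x m)))
        · filter_upwards [eventually_ge_atTop m] with n hn
          exact sub_nonneg.mpr (hmono hn)
      exact sub_nonneg.mp h0
    have key : ∀ n, ‖x n - p‖ ≤ ‖x n - y‖ := by
      intro n
      refine HasSolidNorm.solid ?_
      rw [abs_of_nonneg (sub_nonneg.mpr (hle n)),
        abs_of_nonneg (sub_nonneg.mpr (hy.trans (hle n)))]
      exact sub_le_sub_left hy _
    have hbdd : ∀ n, ‖x n - y‖ ≤ ‖x 0 - y‖ := by
      intro n
      refine HasSolidNorm.solid ?_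
      rw [abs_of_nonneg (sub_nonneg.mpr (hy.trans (hle n))),
        abs_of_nonneg (sub_nonneg.mpr (hy.trans (hle 0)))]
      exact sub_le_sub_right (hmono (Nat.zero_le n)) _
    refine limsup_le_limsup (Eventually.of_forall key) ?_ ?_
    · exact IsBoundedUnder.isCoboundedUnder_le
        (isBoundedUnder_of ⟨0, fun n => norm_nonneg _⟩)
    · exact isBoundedUnder_of ⟨‖x 0 - y‖, hbdd⟩
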